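/- In a Krein space (W, Q), let Z₁⁺ be a maximal uniformly positive subspace and Z₂⁻ a maximal uniformly negative subspace. Then Z₁⁺ and Z₂⁻ are complementary: Z₁⁺ ∩ Z₂⁻ = {0} and Z₁⁺ + Z₂⁻ = W. -/

import Mathlib

set_option linter.unusedSectionVars false
set_option linter.unusedVariables false
set_option maxHeartbeats 1000000
section Aux
variable {W : Type*} [NormedAddCommGroup W] [InnerProductSpace ℂ W] [CompleteSpace W]

noncomputable def Ppos (S : W →L[ℂ] W) : W →L[ℂ] W := (2⁻¹ : ℂ) • (1 + S)

noncomputable def qf (Q S : W →L[ℂ] W) (v : W) : ℝ := ((inner ℂ v ((Q * S) v) : ℂ)).re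

lemma Ppos_add (S : W →L[ℂ] W) (v : W) : Ppos S v + Ppos (-S) v = v := by
  simp only [Ppos, ContinuousLinearMap.smul_apply, ContinuousLinearMap.add_apply,
    ContinuousLinearMap.one_apply, ContinuousLinearMap.neg_apply]
  rw [← smul_add]
  have : v + S v + (v + -S v) = (2:ℂ) • v := by
    rw [two_smul]; abel
  rw [this, smul_smul]; norm_num

lemma S_Ppos (Q S : W →L[ℂ] W) (hS : S * S = 1) (v : W) : S (Ppos S v) = Ppos S v := by
  simp only [Ppos, ContinuousLinearMap.smul_apply, ContinuousLinearMap.add_apply,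
    ContinuousLinearMap.one_apply, ContinuousLinearMap.neg_apply, map_smul, map_add]
  have : S (S v) = v := by
    have := congrArg (fun T : W →L[ℂ] W => T v) hS
    simpa using this
  rw [this, add_comm]

lemma S_Pneg (Q S : W →L[ℂ] W) (hS : S * S = 1) (v : W) : S (Ppos (-S) v) = -(Ppos (-S) v) := by
  simp only [Ppos, ContinuousLinearMap.smul_apply, ContinuousLinearMap.add_apply,
    ContinuousLinearMap.one_apply, ContinuousLinearMap.neg_apply, map_smul, map_add, map_neg]
  have : S (S v) = v := by
    have := congrArg (fun T : W →L[ℂ] W => T v) hS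
    simpa using this
  rw [this, ← smul_neg]
  congr 1
  abel

lemma B_S_comm (Q S : W →L[ℂ] W) (hS : S * S = 1)
    (hpres : ∀ v w : W, (inner ℂ (S v) (Q (S w)) : ℂ) = inner ℂ v (Q w)) (v w : W) :
    (inner ℂ (S v) ((Q * S) w) : ℂ) = inner ℂ v ((Q * S) (S w)) := by
  have hSS : ∀ x : W, S (S x) = x := by
    intro x
    have := congrArg (fun T : W →L[ℂ] W => T x) hS
    simpa using this
  simp only [ContinuousLinearMap.mul_apply]
  rw [hpres v w, hSS w]

lemma B_conj (Q S : W →L[ℂ] W) (hQS : IsSelfAdjoint (Q * S)) (v w : W) :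
    (inner ℂ v ((Q * S) w) : ℂ) = starRingEnd ℂ (inner ℂ w ((Q * S) v)) := by
  have hadj : ContinuousLinearMap.adjoint (Q * S) = Q * S := by
    rw [← ContinuousLinearMap.star_eq_adjoint]; exact hQS
  rw [← inner_conj_symm]
  congr 1
  conv_lhs => rw [← hadj]
  exact ContinuousLinearMap.adjoint_inner_left (Q * S) v w

lemma B_cross (Q S : W →L[ℂ] W) (hS : S * S = 1)
    (hpres : ∀ v w : W, (inner ℂ (S v) (Q (S w)) : ℂ) = inner ℂ v (Q w))
    {a b : W} (ha : S a = a) (hb : S b = -b) :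
    (inner ℂ a ((Q * S) b) : ℂ) = 0 ∧ (inner ℂ b ((Q * S) a) : ℂ) = 0 := by
  constructor
  · have h1 : (inner ℂ a ((Q*S) b) : ℂ) = - inner ℂ a ((Q*S) b) := by
      conv_lhs => rw [← ha]
      rw [B_S_comm Q S hS hpres, hb, map_neg, inner_neg_right]
    linear_combination (h1 : _) / 2
  · have e2 : (inner ℂ (S b) ((Q*S) a) : ℂ) = inner ℂ b ((Q*S) a) := by
      rw [B_S_comm Q S hS hpres, ha]
    have e3 : (inner ℂ (S b) ((Q*S) a) : ℂ) = - inner ℂ b ((Q*S) a) := by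
      rw [hb, inner_neg_left]
    linear_combination (e2 - e3) * (-(1:ℂ)/2)

lemma qf_add_of_Bzero (Q S : W →L[ℂ] W)
    {x y : W} (h1 : (inner ℂ x ((Q * S) y) : ℂ) = 0) (h2 : (inner ℂ y ((Q * S) x) : ℂ) = 0) :
    qf Q S (x + y) = qf Q S x + qf Q S y := by
  simp only [qf, map_add, inner_add_left, inner_add_right, h1, h2]
  simp

lemma qf_add (Q S : W →L[ℂ] W) (hS : S * S = 1)
    (hpres : ∀ v w : W, (inner ℂ (S v) (Q (S w)) : ℂ) = inner ℂ v (Q w))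
    {a b : W} (ha : S a = a) (hb : S b = -b) :
    qf Q S (a + b) = qf Q S a + qf Q S b := by
  obtain ⟨h1, h2⟩ := B_cross Q S hS hpres ha hb
  exact qf_add_of_Bzero Q S h1 h2

lemma qf_decomp (Q S : W →L[ℂ] W) (hS : S * S = 1)
    (hpres : ∀ v w : W, (inner ℂ (S v) (Q (S w)) : ℂ) = inner ℂ v (Q w)) (v : W) :
    qf Q S v = qf Q S (Ppos S v) + qf Q S (Ppos (-S) v) := by
  conv_lhs => rw [← Ppos_add S v]
  exact qf_add Q S hS hpres (S_Ppos Q S hS v) (S_Pneg Q S hS v)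

lemma reQ_eq' (Q S : W →L[ℂ] W) (hS : S * S = 1)
    (hpres : ∀ v w : W, (inner ℂ (S v) (Q (S w)) : ℂ) = inner ℂ v (Q w))
    {v a b : W} (ha : S a = a) (hb : S b = -b) (hab : v = a + b) :
    ((inner ℂ v (Q v) : ℂ)).re = qf Q S a - qf Q S b := by
  have hSS : ∀ x : W, S (S x) = x := by
    intro x
    have := congrArg (fun T : W →L[ℂ] W => T x) hS
    simpa using this
  have hQv : ∀ x : W, Q x = (Q * S) (S x) := by
    intro x; simp [ContinuousLinearMap.mul_apply, hSS]
  obtain ⟨h1, h2⟩ := B_cross Q S hS hpres ha hb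
  subst hab
  rw [hQv, map_add, ha, hb]
  have : a + -b = a - b := by abel
  rw [this, map_sub, inner_add_left, inner_sub_right, inner_sub_right, h1, h2]
  simp only [qf, sub_zero, zero_sub, Complex.add_re, Complex.neg_re, hQv]
  ring

lemma reQ_eq (Q S : W →L[ℂ] W) (hS : S * S = 1)
    (hpres : ∀ v w : W, (inner ℂ (S v) (Q (S w)) : ℂ) = inner ℂ v (Q w)) (v : W) :
    ((inner ℂ v (Q v) : ℂ)).re = qf Q S (Ppos S v) - qf Q S (Ppos (-S) v) :=
  reQ_eq' Q S hS hpres (S_Ppos Q S hS v) (S_Pneg Q S hS v) (Ppos_add S v).symm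

lemma qf_le (Q S : W →L[ℂ] W) (v : W) : qf Q S v ≤ ‖Q * S‖ * ‖v‖ ^ 2 := by
  have h1 : qf Q S v ≤ ‖v‖ * ‖(Q*S) v‖ := by
    have := re_inner_le_norm (𝕜 := ℂ) v ((Q*S) v)
    simpa [qf] using this
  have h2 : ‖(Q*S) v‖ ≤ ‖Q*S‖ * ‖v‖ := (Q*S).le_opNorm v
  calc qf Q S v ≤ ‖v‖ * ‖(Q*S) v‖ := h1
    _ ≤ ‖v‖ * (‖Q*S‖ * ‖v‖) := mul_le_mul_of_nonneg_left h2 (norm_nonneg v)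
    _ = ‖Q*S‖ * ‖v‖ ^ 2 := by ring

lemma Pneg_Ppos (Q S : W →L[ℂ] W) (hS : S * S = 1) (x : W) :
    Ppos (-S) (Ppos S x) = 0 := by
  have h1 := S_Ppos Q S hS x
  set y := Ppos S x with hy
  rw [show Ppos (-S) y = (2⁻¹:ℂ) • (y + -(S y)) from by
    simp [Ppos], h1]
  simp

lemma graphRep (Q S : W →L[ℂ] W) (hS : S * S = 1)
    (hQS : IsSelfAdjoint (Q * S))
    (hpres : ∀ v w : W, (inner ℂ (S v) (Q (S w)) : ℂ) = inner ℂ v (Q w))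
    (hbdd : ∃ c > 0, ∀ v : W, c * ‖v‖ ^ 2 ≤ ((inner ℂ v ((Q * S) v) : ℂ)).re)
    (Z : Submodule ℂ W)
    (hZpos : ∃ α > 0, ∀ v ∈ Z, α * ‖v‖ ^ 2 ≤ ((inner ℂ v (Q v) : ℂ)).re)
    (hZmax : ∀ Z' : Submodule ℂ W,
      (∃ α > 0, ∀ v ∈ Z', α * ‖v‖ ^ 2 ≤ ((inner ℂ v (Q v) : ℂ)).re) → Z ≤ Z' → Z' = Z) :
    ∃ (k : ℝ) (f : W →ₗ[ℂ] W), 0 ≤ k ∧ k < 1 ∧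
      ∀ w : W, f w ∈ Z ∧ Ppos S (f w) = Ppos S w ∧
        qf Q S (Ppos (-S) (f w)) ≤ k * qf Q S (Ppos S w) := by
  obtain ⟨c, hc, hq⟩ := hbdd
  obtain ⟨α, hα, hZb⟩ := hZpos
  have hq' : ∀ v : W, c * ‖v‖ ^ 2 ≤ qf Q S v := hq
  have hq0 : ∀ v : W, 0 ≤ qf Q S v := fun v => le_trans (by positivity) (hq' v)
  by_cases hCC0 : ‖Q * S‖ = 0
  · -- degenerate: W is trivial
    have hw0 : ∀ v : W, v = 0 := by
      intro v
      have h1 := hq' v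
      have h2 := qf_le Q S v
      rw [hCC0, zero_mul] at h2
      have h3 : ‖v‖ = 0 := by
        by_contra h
        have hpos : 0 < ‖v‖ := lt_of_le_of_ne (norm_nonneg v) (Ne.symm h)
        nlinarith [mul_pos hc (pow_pos hpos 2)]
      exact norm_eq_zero.mp h3
    refine ⟨0, 0, le_refl _, one_pos, fun w => ?_⟩
    have hz : (0 : W →ₗ[ℂ] W) w = 0 := rfl
    refine ⟨?_, ?_, ?_⟩
    · rw [hz]; exact Z.zero_mem
    · rw [hz, hw0 w]
    · rw [hz]; simp [qf]
  have hCC : 0 < ‖Q * S‖ := lt_of_le_of_ne (norm_nonneg _) (Ne.symm hCC0)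
  set CC := ‖Q * S‖ with hCCdef
  set k₀ : ℝ := max (CC - α) 0 / (CC + α) with hk₀def
  have hk₀0 : 0 ≤ k₀ := by positivity
  have hk₀1 : k₀ < 1 := by
    rw [div_lt_one (by linarith)]
    exact max_lt (by linarith) (by linarith)
  -- g1 : graph estimate
  have g1 : ∀ v ∈ Z, qf Q S (Ppos (-S) v) ≤ k₀ * qf Q S (Ppos S v) := by
    intro v hv
    have h7 := reQ_eq Q S hS hpres v
    have hZv := hZb v hv
    have h6 := qf_decomp Q S hS hpres v
    have h8 := qf_le Q S v
    have hPn := hq0 (Ppos (-S) v)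
    have hPp := hq0 (Ppos S v)
    have key : qf Q S (Ppos (-S) v) * (CC + α) ≤ max (CC - α) 0 * qf Q S (Ppos S v) := by
      have h9 : (CC - α) * qf Q S (Ppos S v) ≤ max (CC - α) 0 * qf Q S (Ppos S v) :=
        mul_le_mul_of_nonneg_right (le_max_left _ _) hPp
      nlinarith [mul_le_mul_of_nonneg_left (hZb v hv) (le_of_lt hCC),
        mul_le_mul_of_nonneg_left h8 (le_of_lt hα)]
    rw [hk₀def, div_mul_eq_mul_div, le_div_iff₀ (by linarith)]
    linarith
  -- lower bound for norm on Z
  have g2 : ∀ v ∈ Z, c * ‖v‖ ^ 2 ≤ ((1 + k₀) * CC) * ‖Ppos S v‖ ^ 2 := by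
    intro v hv
    have h6 := qf_decomp Q S hS hpres v
    have h8 := qf_le Q S (Ppos S v)
    have hg1 := g1 v hv
    nlinarith [hq' v, hq0 (Ppos S v)]
  set βi : ℝ := Real.sqrt ((1 + k₀) * CC / c) with hβidef
  have g2n : ∀ v ∈ Z, ‖v‖ ≤ βi * ‖Ppos S v‖ := by
    intro v hv
    have h1 : ‖v‖ ^ 2 ≤ ((1 + k₀) * CC / c) * ‖Ppos S v‖ ^ 2 := by
      rw [div_mul_eq_mul_div, le_div_iff₀ hc]
      nlinarith [g2 v hv]
    have h2 : ‖v‖ ^ 2 ≤ (βi * ‖Ppos S v‖) ^ 2 := by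
      rw [mul_pow, hβidef, Real.sq_sqrt (by positivity)]
      exact h1
    have h3 : (0:ℝ) ≤ βi * ‖Ppos S v‖ := by positivity
    nlinarith [norm_nonneg v]
  have huniq : ∀ z ∈ Z, ∀ z' ∈ Z, Ppos S z = Ppos S z' → z = z' := by
    intro z hz z' hz' he
    have h1 := g2n (z - z') (Z.sub_mem hz hz')
    rw [map_sub, he, sub_self, norm_zero, mul_zero] at h1
    have : ‖z - z'‖ = 0 := le_antisymm h1 (norm_nonneg _)
    exact sub_eq_zero.mp (norm_eq_zero.mp this)
  -- Z is closed
  have hZclosed : IsClosed (Z : Set W) := by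
    have hcont : Continuous fun v : W => ((inner ℂ v (Q v) : ℂ)).re :=
      Complex.continuous_re.comp (Continuous.inner continuous_id Q.continuous)
    have hcl : IsClosed {v : W | α * ‖v‖ ^ 2 ≤ ((inner ℂ v (Q v) : ℂ)).re} :=
      isClosed_le (by continuity) hcont
    have hsub : (Z : Set W) ⊆ {v | α * ‖v‖ ^ 2 ≤ ((inner ℂ v (Q v) : ℂ)).re} := fun v hv => hZb v hv
    have h1 : Z.topologicalClosure = Z := by
      apply hZmax _ ⟨α, hα, ?_⟩ Z.le_topologicalClosure
      intro v hv
      have hv' : v ∈ closure (Z : Set W) := hv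
      exact closure_minimal hsub hcl hv'
    rw [← h1]
    exact Submodule.isClosed_topologicalClosure Z
  haveI : CompleteSpace Z := hZclosed.completeSpace_coe
  -- M = P⁺(Z) is closed
  set M : Submodule ℂ W := Z.map (Ppos S : W →ₗ[ℂ] W) with hMdef
  have hMmem : ∀ x, x ∈ M ↔ ∃ z ∈ Z, Ppos S z = x := by
    intro x; rw [hMdef, Submodule.mem_map]; exact Iff.rfl
  have hMclosed : IsClosed (M : Set W) := by
    set g : Z →L[ℂ] W := (Ppos S).comp Z.subtypeL with hgdef
    have hrange : Set.range g = (M : Set W) := by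
      ext x
      constructor
      · rintro ⟨z, rfl⟩
        exact (hMmem _).mpr ⟨z, z.2, rfl⟩
      · intro hx
        obtain ⟨z, hz, rfl⟩ := (hMmem x).mp hx
        exact ⟨⟨z, hz⟩, rfl⟩
    have hanti : AntilipschitzWith βi.toNNReal g := by
      apply g.antilipschitz_of_bound
      intro x
      have := g2n x x.2
      rwa [Real.coe_toNNReal βi (Real.sqrt_nonneg _)]
    rw [← hrange]
    exact hanti.isClosed_range g.uniformContinuous
  -- surjectivity of P⁺ restricted to Z
  have hPZ : ∀ w : W, Ppos S w ∈ M := by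
    by_contra hcon
    push_neg at hcon
    obtain ⟨w, hw⟩ := hcon
    set Kp : Submodule ℂ W := LinearMap.ker (Ppos (-S) : W →ₗ[ℂ] W) with hKpdef
    have hKpmem : ∀ x : W, x ∈ Kp ↔ Ppos (-S) x = 0 := fun x => LinearMap.mem_ker
    have hKpclosed : IsClosed (Kp : Set W) := ContinuousLinearMap.isClosed_ker (Ppos (-S))
    haveI : CompleteSpace Kp := hKpclosed.completeSpace_coe
    have hPinKp : ∀ x : W, Ppos S x ∈ Kp := fun x => (hKpmem _).mpr (Pneg_Ppos Q S hS x)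
    have hKpfix : ∀ x ∈ Kp, Ppos S x = x := by
      intro x hx
      have h1 := Ppos_add S x
      rw [(hKpmem x).mp hx] at h1
      simpa using h1
    have hSfix : ∀ x ∈ Kp, S x = x := by
      intro x hx
      conv_lhs => rw [← hKpfix x hx]
      rw [S_Ppos Q S hS, hKpfix x hx]
    have hMK : M ≤ Kp := by
      intro m hm
      obtain ⟨z, hz, rfl⟩ := (hMmem m).mp hm
      exact hPinKp z
    set M' : Submodule ℂ Kp := M.comap Kp.subtype with hM'def
    have hM'closed : IsClosed (M' : Set Kp) := by
      have he : (M' : Set Kp) = (Subtype.val) ⁻¹' (M : Set W) := rfl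
      rw [he]
      exact hMclosed.preimage continuous_subtype_val
    haveI : CompleteSpace M' := hM'closed.completeSpace_coe
    have hM'ne : M' ≠ ⊤ := by
      intro htop
      apply hw
      have h1 : (⟨Ppos S w, hPinKp w⟩ : Kp) ∈ M' := by rw [htop]; trivial
      exact Submodule.mem_comap.mp h1
    have hbot : M'ᗮ ≠ ⊥ := by
      intro hb
      exact hM'ne (Submodule.orthogonal_eq_bot_iff.mp hb)
    obtain ⟨u, hu, hune⟩ := (Submodule.ne_bot_iff _).mp hbot
    set G : Kp →L[ℂ] Kp := (Kp.orthogonalProjectionOnto) ∘L ((Q * S) ∘L Kp.subtypeL) with hGdef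
    have gG1 : ∀ m x : Kp, (inner ℂ m (G x) : ℂ) = inner ℂ (m : W) ((Q * S) (x : W)) := by
      intro m x
      have hGx : (G x : W) = ((Kp.orthogonalProjectionOnto ((Q*S) (x:W)) : Kp) : W) := rfl
      rw [Submodule.coe_inner, hGx]
      set v : W := (Q*S) (x:W) with hvdef
      have h0 : (inner ℂ (v - ((Kp.orthogonalProjectionOnto v : Kp) : W)) ((m : W)) : ℂ) = 0 :=
        Kp.starProjection_inner_eq_zero v (m : W) m.2
      have h0' : (inner ℂ (m : W) (v - ((Kp.orthogonalProjectionOnto v : Kp) : W)) : ℂ) = 0 :=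
        inner_eq_zero_symm.mp h0
      rw [inner_sub_right] at h0'
      linear_combination -h0'
    have gG2 : ∀ x : Kp, c * ‖x‖ ^ 2 ≤ ((inner ℂ x (G x) : ℂ)).re := by
      intro x
      rw [gG1 x x]
      have := hq' (x : W)
      simpa [qf] using this
    have gG3 : ∀ x : Kp, ‖x‖ ≤ c⁻¹ * ‖G x‖ := by
      intro x
      have h1 := gG2 x
      have h2 : ((inner ℂ x (G x) : ℂ)).re ≤ ‖x‖ * ‖G x‖ := by
        have := re_inner_le_norm (𝕜 := ℂ) x (G x)
        simpa using this
      by_cases hx : ‖x‖ = 0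
      · rw [hx]; positivity
      · have hxpos : 0 < ‖x‖ := lt_of_le_of_ne (norm_nonneg _) (Ne.symm hx)
        rw [le_inv_mul_iff₀ hc]
        nlinarith
    set RG : Submodule ℂ Kp := LinearMap.range (G : Kp →ₗ[ℂ] Kp) with hRGdef
    have hRGclosed : IsClosed (RG : Set Kp) := by
      have hanti : AntilipschitzWith (c⁻¹).toNNReal G := by
        apply G.antilipschitz_of_bound
        intro x
        rw [Real.coe_toNNReal _ (by positivity)]
        exact gG3 x
      have he : (RG : Set Kp) = Set.range G := by
        ext x
        simp [hRGdef, LinearMap.mem_range, Set.mem_range, eq_comm]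
      rw [he]
      exact hanti.isClosed_range G.uniformContinuous
    haveI : CompleteSpace RG := hRGclosed.completeSpace_coe
    have hRGtop : RG = ⊤ := by
      rw [← Submodule.orthogonal_eq_bot_iff, Submodule.eq_bot_iff]
      intro x hx
      have h1 : (inner ℂ (G x) x : ℂ) = 0 :=
        (Submodule.mem_orthogonal RG x).mp hx (G x) (LinearMap.mem_range_self _ x)
      have h2 : (inner ℂ x (G x) : ℂ) = 0 := by
        rw [← inner_conj_symm, h1]; simp
      have h3 := gG2 x
      rw [h2] at h3
      simp only [Complex.zero_re] at h3
      have h4 : ‖x‖ = 0 := by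
        by_contra h
        have hxpos : 0 < ‖x‖ := lt_of_le_of_ne (norm_nonneg _) (Ne.symm h)
        nlinarith [mul_pos hc (pow_pos hxpos 2)]
      exact norm_eq_zero.mp h4
    obtain ⟨xG, hxG⟩ : ∃ xG : Kp, G xG = u := by
      have h1 : u ∈ RG := hRGtop ▸ Submodule.mem_top
      exact h1
    set w₀ : W := (xG : W) with hw₀def
    have gW1 : ∀ m ∈ M, (inner ℂ m ((Q * S) w₀) : ℂ) = 0 := by
      intro m hm
      have hmKp : m ∈ Kp := hMK hm
      have h1 := gG1 ⟨m, hmKp⟩ xG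
      rw [hxG] at h1
      rw [← h1]
      exact (Submodule.mem_orthogonal M' u).mp hu ⟨m, hmKp⟩ (Submodule.mem_comap.mpr hm)
    have hPw₀ : Ppos S w₀ = w₀ := hKpfix w₀ xG.2
    have hSw₀ : S w₀ = w₀ := hSfix w₀ xG.2
    have gW2 : w₀ ∉ M := by
      intro hmem
      have h1 := gW1 w₀ hmem
      have h2 := hq' w₀
      have h3 : qf Q S w₀ = 0 := by
        have : qf Q S w₀ = ((inner ℂ w₀ ((Q * S) w₀) : ℂ)).re := rfl
        rw [this, h1]
        simp
      rw [h3] at h2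
      have h4 : ‖w₀‖ = 0 := by
        by_contra h
        have hxpos : 0 < ‖w₀‖ := lt_of_le_of_ne (norm_nonneg _) (Ne.symm h)
        nlinarith [mul_pos hc (pow_pos hxpos 2)]
      have h5 : w₀ = 0 := norm_eq_zero.mp h4
      have h6 : xG = 0 := Subtype.ext h5
      rw [h6, map_zero] at hxG
      exact hune hxG.symm
    -- extend Z by w₀, contradicting maximality
    set Z'' : Submodule ℂ W := Z ⊔ Submodule.span ℂ {w₀} with hZ''def
    have hZ''pos : ∀ v' ∈ Z'', (min α c / 2) * ‖v'‖ ^ 2 ≤ ((inner ℂ v' (Q v') : ℂ)).re := by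
      intro v' hv'
      obtain ⟨v, hv, z, hz, rfl⟩ := Submodule.mem_sup.mp hv'
      obtain ⟨lam, rfl⟩ := Submodule.mem_span_singleton.mp hz
      have hSa : S (Ppos S v + lam • w₀) = Ppos S v + lam • w₀ := by
        rw [map_add, S_Ppos Q S hS, map_smul, hSw₀]
      have hSb : S (Ppos (-S) v) = -(Ppos (-S) v) := S_Pneg Q S hS v
      have hab : v + lam • w₀ = (Ppos S v + lam • w₀) + Ppos (-S) v := by
        conv_lhs => rw [← Ppos_add S v]
        abel
      have hre := reQ_eq' Q S hS hpres hSa hSb hab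
      have hBv : (inner ℂ (Ppos S v) ((Q * S) (lam • w₀)) : ℂ) = 0 := by
        rw [map_smul, inner_smul_right, gW1 (Ppos S v) ((hMmem _).mpr ⟨v, hv, rfl⟩), mul_zero]
      have hBv' : (inner ℂ (lam • w₀) ((Q * S) (Ppos S v)) : ℂ) = 0 := by
        rw [B_conj Q S hQS, hBv, map_zero]
      have hsum := qf_add_of_Bzero Q S hBv hBv'
      have h7 := reQ_eq Q S hS hpres v
      have h8 := hZb v hv
      have h9 := hq' (lam • w₀)
      rw [hre, hsum]
      have h10 : ‖v + lam • w₀‖ ^ 2 ≤ 2 * (‖v‖ ^ 2 + ‖lam • w₀‖ ^ 2) := by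
        nlinarith [mul_self_le_mul_self (norm_nonneg (v + lam • w₀)) (norm_add_le v (lam • w₀)),
          sq_nonneg (‖v‖ - ‖lam • w₀‖), norm_nonneg v, norm_nonneg (lam • w₀)]
      have hmin1 : min α c ≤ α := min_le_left _ _
      have hmin2 : min α c ≤ c := min_le_right _ _
      have hminpos : 0 < min α c := lt_min hα hc
      nlinarith [norm_nonneg v, norm_nonneg (lam • w₀), sq_nonneg ‖v‖]
    have hZ''eq : Z'' = Z := hZmax Z'' ⟨min α c / 2, by positivity, hZ''pos⟩ le_sup_left
    have hw₀Z : w₀ ∈ Z := by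
      rw [← hZ''eq]
      exact Submodule.mem_sup_right (Submodule.mem_span_singleton_self w₀)
    exact gW2 ((hMmem w₀).mpr ⟨w₀, hw₀Z, hPw₀⟩)
  -- construct the linear section
  have hex : ∀ w : W, ∃ z, z ∈ Z ∧ Ppos S z = Ppos S w := by
    intro w
    obtain ⟨z, hz, hze⟩ := (hMmem (Ppos S w)).mp (hPZ w)
    exact ⟨z, hz, hze⟩
  choose f₀ hf₀Z hf₀P using hex
  have hadd : ∀ x y : W, f₀ (x + y) = f₀ x + f₀ y := by
    intro x y
    apply huniq _ (hf₀Z _) _ (Z.add_mem (hf₀Z x) (hf₀Z y))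
    rw [hf₀P (x + y), map_add, map_add, hf₀P x, hf₀P y]
  have hsmul : ∀ (a : ℂ) (x : W), f₀ (a • x) = a • f₀ x := by
    intro a x
    apply huniq _ (hf₀Z _) _ (Z.smul_mem a (hf₀Z x))
    rw [hf₀P (a • x), map_smul, map_smul, hf₀P x]
  refine ⟨k₀, ⟨⟨f₀, hadd⟩, hsmul⟩, hk₀0, hk₀1, fun w => ⟨hf₀Z w, hf₀P w, ?_⟩⟩
  have h1 := g1 (f₀ w) (hf₀Z w)
  rwa [hf₀P w] at h1

lemma qf_neg_neg (Q S : W →L[ℂ] W) (v : W) : qf (-Q) (-S) v = qf Q S v := by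
  simp [qf, neg_mul_neg]

end Aux

/-- In a Krein space (W,Q), a maximal uniformly positive subspace Z₁ and a maximal
uniformly negative subspace Z₂ are complementary. -/
theorem stmt14 {W : Type*} [NormedAddCommGroup W] [InnerProductSpace ℂ W] [CompleteSpace W]
    (Q S : W →L[ℂ] W) (hQ : IsSelfAdjoint Q) (hS : S * S = 1)
    (hpres : ∀ v w : W, (inner ℂ (S v) (Q (S w)) : ℂ) = inner ℂ v (Q w))
    (hpos : (Q * S).IsPositive)
    (hbdd : ∃ c > 0, ∀ v : W, c * ‖v‖ ^ 2 ≤ ((inner ℂ v ((Q * S) v) : ℂ)).re)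
    (Z₁ Z₂ : Submodule ℂ W)
    (hZ₁pos : ∃ α > 0, ∀ v ∈ Z₁, α * ‖v‖ ^ 2 ≤ ((inner ℂ v (Q v) : ℂ)).re)
    (hZ₁max : ∀ Z' : Submodule ℂ W,
      (∃ α > 0, ∀ v ∈ Z', α * ‖v‖ ^ 2 ≤ ((inner ℂ v (Q v) : ℂ)).re) → Z₁ ≤ Z' → Z' = Z₁)
    (hZ₂neg : ∃ α > 0, ∀ v ∈ Z₂, ((inner ℂ v (Q v) : ℂ)).re ≤ -α * ‖v‖ ^ 2)
    (hZ₂max : ∀ Z' : Submodule ℂ W,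
      (∃ α > 0, ∀ v ∈ Z', ((inner ℂ v (Q v) : ℂ)).re ≤ -α * ‖v‖ ^ 2) → Z₂ ≤ Z' → Z' = Z₂) :
    Z₁ ⊓ Z₂ = ⊥ ∧ Z₁ ⊔ Z₂ = ⊤ := by
  have h1 := graphRep Q S hS hpos.isSelfAdjoint hpres hbdd Z₁ hZ₁pos hZ₁max
  have hS2 : (-S) * (-S) = 1 := by rw [neg_mul_neg]; exact hS
  have hQS2 : IsSelfAdjoint ((-Q) * (-S)) := by rw [neg_mul_neg]; exact hpos.isSelfAdjoint
  have hpres2 : ∀ v w : W, (inner ℂ ((-S) v) ((-Q) ((-S) w)) : ℂ) = inner ℂ v ((-Q) w) := by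
    intro v w
    simp only [ContinuousLinearMap.neg_apply, map_neg, inner_neg_left, inner_neg_right, neg_neg]
    rw [hpres]
  have hbdd2 : ∃ c > 0, ∀ v : W, c * ‖v‖ ^ 2 ≤ ((inner ℂ v (((-Q) * (-S)) v) : ℂ)).re := by
    rw [neg_mul_neg]; exact hbdd
  have hZ₂pos' : ∃ α > 0, ∀ v ∈ Z₂, α * ‖v‖ ^ 2 ≤ ((inner ℂ v ((-Q) v) : ℂ)).re := by
    obtain ⟨α, hα, h⟩ := hZ₂neg
    refine ⟨α, hα, fun v hv => ?_⟩
    have h2 := h v hv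
    simp only [ContinuousLinearMap.neg_apply, inner_neg_right, Complex.neg_re]
    linarith
  have hZ₂max' : ∀ Z' : Submodule ℂ W,
      (∃ α > 0, ∀ v ∈ Z', α * ‖v‖ ^ 2 ≤ ((inner ℂ v ((-Q) v) : ℂ)).re) → Z₂ ≤ Z' → Z' = Z₂ := by
    intro Z' hZ' hle
    apply hZ₂max Z' ?_ hle
    obtain ⟨α, hα, h⟩ := hZ'
    refine ⟨α, hα, fun v hv => ?_⟩
    have h2 := h v hv
    simp only [ContinuousLinearMap.neg_apply, inner_neg_right, Complex.neg_re] at h2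
    linarith
  have h2 := graphRep (-Q) (-S) hS2 hQS2 hpres2 hbdd2 Z₂ hZ₂pos' hZ₂max'
  obtain ⟨k₁, f₁, hk₁0, hk₁1, hf₁⟩ := h1
  obtain ⟨k₂, f₂, hk₂0, hk₂1, hf₂⟩ := h2
  constructor
  · -- intersection
    rw [Submodule.eq_bot_iff]
    intro v hv
    obtain ⟨α₁, hα₁, hb₁⟩ := hZ₁pos
    obtain ⟨α₂, hα₂, hb₂⟩ := hZ₂neg
    have e1 := hb₁ v hv.1
    have e2 := hb₂ v hv.2
    have hn : ‖v‖ = 0 := by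
      by_contra h
      have hp : 0 < ‖v‖ := lt_of_le_of_ne (norm_nonneg _) (Ne.symm h)
      nlinarith [mul_pos hα₁ (pow_pos hp 2), mul_pos hα₂ (pow_pos hp 2)]
    exact norm_eq_zero.mp hn
  · -- sum
    obtain ⟨c, hc, hq⟩ := hbdd
    have hq' : ∀ v : W, c * ‖v‖ ^ 2 ≤ qf Q S v := hq
    have hq0 : ∀ v : W, 0 ≤ qf Q S v := fun v => le_trans (by positivity) (hq' v)
    set k : ℝ := max k₁ k₂ with hkdef
    have hk0 : 0 ≤ k := le_trans hk₁0 (le_max_left _ _)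
    have hk1 : k < 1 := max_lt hk₁1 hk₂1
    set N : W →ₗ[ℂ] W :=
      ((Ppos (-S) : W →L[ℂ] W) : W →ₗ[ℂ] W) ∘ₗ f₁ + ((Ppos S : W →L[ℂ] W) : W →ₗ[ℂ] W) ∘ₗ f₂
      with hNdef
    have hNapply : ∀ w : W, N w = Ppos (-S) (f₁ w) + Ppos S (f₂ w) := fun w => rfl
    have hMw : ∀ w : W, w + N w = f₁ w + f₂ w := by
      intro w
      have e1 : Ppos S (f₁ w) = Ppos S w := (hf₁ w).2.1
      have e2 : Ppos (-S) (f₂ w) = Ppos (-S) w := (hf₂ w).2.1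
      have e4 := Ppos_add S (f₁ w)
      have e5 := Ppos_add S (f₂ w)
      rw [hNapply]
      calc w + (Ppos (-S) (f₁ w) + Ppos S (f₂ w))
          = (Ppos S w + Ppos (-S) w) + (Ppos (-S) (f₁ w) + Ppos S (f₂ w)) := by
            rw [Ppos_add S w]
        _ = (Ppos S (f₁ w) + Ppos (-S) (f₁ w)) + (Ppos S (f₂ w) + Ppos (-S) (f₂ w)) := by
            rw [← e1, ← e2]; abel
        _ = f₁ w + f₂ w := by rw [e4, e5]
    have hNq : ∀ w : W, qf Q S (N w) ≤ k * qf Q S w := by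
      intro w
      have hS1 : S (Ppos (-S) (f₁ w)) = -(Ppos (-S) (f₁ w)) := S_Pneg Q S hS _
      have hS2' : S (Ppos S (f₂ w)) = Ppos S (f₂ w) := S_Ppos Q S hS _
      have hsplit : qf Q S (N w) = qf Q S (Ppos S (f₂ w)) + qf Q S (Ppos (-S) (f₁ w)) := by
        rw [hNapply w, add_comm (Ppos (-S) (f₁ w))]
        exact qf_add Q S hS hpres hS2' hS1
      have hb1 : qf Q S (Ppos (-S) (f₁ w)) ≤ k₁ * qf Q S (Ppos S w) := by
        exact (hf₁ w).2.2
      have hb2 : qf Q S (Ppos S (f₂ w)) ≤ k₂ * qf Q S (Ppos (-S) w) := by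
        have h3 := (hf₂ w).2.2
        rw [neg_neg, qf_neg_neg, qf_neg_neg] at h3
        exact h3
      have hdec := qf_decomp Q S hS hpres w
      rw [hsplit, hdec]
      nlinarith [hq0 (Ppos S w), hq0 (Ppos (-S) w), le_max_left k₁ k₂, le_max_right k₁ k₂,
        mul_le_mul_of_nonneg_right (le_max_left k₁ k₂) (hq0 (Ppos S w)),
        mul_le_mul_of_nonneg_right (le_max_right k₁ k₂) (hq0 (Ppos (-S) w))]
    set CCn : ℝ := ‖Q * S‖ with hCCdef
    have hCCn0 : 0 ≤ CCn := norm_nonneg _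
    set D : ℝ := Real.sqrt (k * CCn / c) with hDdef
    have hNbound : ∀ w : W, ‖N w‖ ≤ D * ‖w‖ := by
      intro w
      have h3 : c * ‖N w‖ ^ 2 ≤ qf Q S (N w) := hq' (N w)
      have h4 := hNq w
      have h5 : qf Q S w ≤ CCn * ‖w‖ ^ 2 := qf_le Q S w
      have h6 : ‖N w‖ ^ 2 ≤ (k * CCn / c) * ‖w‖ ^ 2 := by
        rw [div_mul_eq_mul_div, le_div_iff₀ hc]
        nlinarith [mul_le_mul_of_nonneg_left h5 hk0]
      have h7 : ‖N w‖ ^ 2 ≤ (D * ‖w‖) ^ 2 := by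
        rw [mul_pow, hDdef, Real.sq_sqrt (by positivity)]
        exact h6
      have h8 : (0:ℝ) ≤ D * ‖w‖ := by positivity
      nlinarith [norm_nonneg (N w)]
    set Ncl : W →L[ℂ] W := N.mkContinuous D hNbound with hNcldef
    have hNclapp : ∀ w : W, Ncl w = N w := fun w => rfl
    have hiter : ∀ (m : ℕ) (w : W), qf Q S ((Ncl ^ m) w) ≤ k ^ m * qf Q S w := by
      intro m
      induction m with
      | zero => intro w; simp
      | succ n ih =>
        intro w
        have h3 : (Ncl ^ (n + 1)) w = (Ncl ^ n) (Ncl w) := by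
          rw [pow_succ]; rfl
        rw [h3]
        calc qf Q S ((Ncl ^ n) (Ncl w)) ≤ k ^ n * qf Q S (Ncl w) := ih (Ncl w)
          _ ≤ k ^ n * (k * qf Q S w) := by
              apply mul_le_mul_of_nonneg_left _ (pow_nonneg hk0 n)
              rw [hNclapp]; exact hNq w
          _ = k ^ (n + 1) * qf Q S w := by ring
    obtain ⟨m, hm⟩ : ∃ m : ℕ, k ^ m < c / (CCn + 1) :=
      exists_pow_lt_of_lt_one (by positivity) hk1
    set d : ℝ := Real.sqrt (k ^ m * CCn / c) with hddef
    have hd0 : 0 ≤ d := Real.sqrt_nonneg _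
    have hdval : d ^ 2 = k ^ m * CCn / c := Real.sq_sqrt (by positivity)
    have hd1 : d < 1 := by
      have h3 : k ^ m * CCn / c < 1 := by
        rcases eq_or_lt_of_le hCCn0 with h5 | h5
        · rw [← h5]
          simp [hc]
        · rw [div_lt_one hc]
          have h4 : k ^ m * CCn < (c / (CCn + 1)) * CCn := mul_lt_mul_of_pos_right hm h5
          have h6 : (c / (CCn + 1)) * CCn < c := by
            rw [div_mul_eq_mul_div, div_lt_iff₀ (by linarith)]
            nlinarith
          linarith
      nlinarith
    have hopnorm : ‖Ncl ^ m‖ ≤ d := by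
      apply ContinuousLinearMap.opNorm_le_bound _ hd0
      intro w
      have h3 := hiter m w
      have h4 : c * ‖(Ncl ^ m) w‖ ^ 2 ≤ qf Q S ((Ncl ^ m) w) := hq' _
      have h5 : qf Q S w ≤ CCn * ‖w‖ ^ 2 := qf_le Q S w
      have h6 : ‖(Ncl ^ m) w‖ ^ 2 ≤ (d * ‖w‖) ^ 2 := by
        rw [mul_pow, hdval, div_mul_eq_mul_div, le_div_iff₀ hc]
        nlinarith [mul_le_mul_of_nonneg_left h5 (pow_nonneg hk0 m)]
      have h8 : (0:ℝ) ≤ d * ‖w‖ := by positivity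
      nlinarith [norm_nonneg ((Ncl ^ m) w)]
    set a : W →L[ℂ] W := -Ncl with hadef
    have hanorm : ‖a ^ m‖ < 1 := by
      have h3 : ‖a ^ m‖ = ‖Ncl ^ m‖ := by
        rcases Nat.even_or_odd m with he | ho
        · rw [hadef, he.neg_pow]
        · rw [hadef, ho.neg_pow, norm_neg]
      rw [h3]
      -- d < 1
      exact lt_of_le_of_lt hopnorm hd1
    set u : (W →L[ℂ] W)ˣ := Units.oneSub (a ^ m) hanorm with hudef
    set s : W →L[ℂ] W := ∑ i ∈ Finset.range m, a ^ i with hsdef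
    have hgeom : (a - 1) * s = a ^ m - 1 := mul_geom_sum a m
    have hone : (1 - a) * s = 1 - a ^ m := by
      have h3 : (1 - a) * s = -((a - 1) * s) := by noncomm_ring
      rw [h3, hgeom]
      noncomm_ring
    set T : W →L[ℂ] W := s * ↑(u⁻¹) with hTdef
    have hright : (1 - a) * T = 1 := by
      rw [hTdef, ← mul_assoc, hone]
      exact u.mul_inv
    have hsub : (1 : W →L[ℂ] W) - a = 1 + Ncl := by rw [hadef, sub_neg_eq_add]
    rw [eq_top_iff]
    intro w _
    have hTw : (1 + Ncl) (T w) = w := by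
      have h3 := congrArg (fun A : W →L[ℂ] W => A w) hright
      simp only [ContinuousLinearMap.mul_apply, ContinuousLinearMap.one_apply] at h3
      rw [hsub] at h3
      exact h3
    have h4 : w = f₁ (T w) + f₂ (T w) := by
      have h5 : (1 + Ncl) (T w) = T w + N (T w) := by
        simp only [ContinuousLinearMap.add_apply, ContinuousLinearMap.one_apply]
        rw [hNclapp]
      rw [← hMw (T w), ← h5, hTw]
    rw [h4]
    exact Submodule.add_mem_sup ((hf₁ (T w)).1) ((hf₂ (T w)).1)
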